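/- arXiv:2508.04445 — 3 statements merged into one kernel-verified Lean document; each statement's English description precedes it below -/
import Mathlib

section
/- For all integers k ≥ 1 and t ≥ 2, the function f defined by the recursion f(k,t)=1 if k=1 or t=2, f(k,3)=k, and f(k,t)=f(k,t-2)+f(k-1,t)+1 otherwise, satisfies f(k,t) < 2·C(⌊(t-1)/2⌋+k-1, ⌊(t-1)/2⌋). -/
/-- The function `f(k, t)` defined by: `f(k, t) = 1` if `k = 1` or `t = 2`,
`f(k, 3) = k`, and `f(k, t) = f(k, t-2) + f(k-1, t) + 1` for `k ≥ 2`, `t ≥ 4`.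
(Values for `k = 0` or `t ≤ 1` are irrelevant junk values.) -/
def f : ℕ → ℕ → ℕ
  | 0, _ => 1
  | 1, _ => 1
  | _+2, 0 => 1
  | _+2, 1 => 1
  | _+2, 2 => 1
  | k+2, 3 => k+2
  | k+2, t+4 => f (k+2) (t+2) + f (k+1) (t+4) + 1
termination_by k t => k + t
decreasing_by all_goals omega

theorem f_aux (k t : ℕ) : f (k+1) (t+2) < 2 * Nat.choose ((t+1)/2 + k) ((t+1)/2) := by
  match k, t with
  | 0, t =>
    show f 1 (t+2) < _
    rw [show f 1 (t+2) = 1 by simp [f], show (t+1)/2 + 0 = (t+1)/2 by omega,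
      Nat.choose_self]
    omega
  | k+1, 0 =>
    rw [show f (k+2) 2 = 1 by simp [f]]
    simp [Nat.choose]
  | k+1, 1 =>
    rw [show f (k+2) 3 = k+2 by simp [f], show (1+1)/2 = 1 from rfl,
      Nat.choose_one_right]
    omega
  | k+1, t+2 =>
    have h1 := f_aux (k+1) t
    have h2 := f_aux k (t+2)
    have ha : (t+2+1)/2 = (t+1)/2 + 1 := by omega
    have heq : f (k+2) (t+2+2) = f (k+2) (t+2) + f (k+1) (t+2+2) + 1 := by
      rw [show t+2+2 = t+4 by omega]; rw [f]
    rw [heq, ha]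
    rw [ha] at h2
    set a := (t+1)/2 with ha'
    have hp : Nat.choose (a + 1 + (k+1)) (a+1)
        = Nat.choose (a + (k+1)) a + Nat.choose (a + (k+1)) (a+1) := by
      rw [show a + 1 + (k+1) = (a + (k+1)) + 1 by omega, Nat.choose_succ_succ']
    have h1' : f (k+2) (t+2) < 2 * Nat.choose (a + (k+1)) a := h1
    have h2' : f (k+1) (t+2+2) < 2 * Nat.choose (a + (k+1)) (a+1) := by
      rw [show a + (k+1) = a + 1 + k by omega]; exact h2
    omega
termination_by k + t
decreasing_by all_goals omega

theorem f_lt (k t : ℕ) (hk : 1 ≤ k) (ht : 2 ≤ t) :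
    f k t < 2 * Nat.choose ((t - 1) / 2 + k - 1) ((t - 1) / 2) := by
  obtain ⟨k', rfl⟩ : ∃ k', k = k' + 1 := ⟨k - 1, by omega⟩
  obtain ⟨t', rfl⟩ : ∃ t', t = t' + 2 := ⟨t - 2, by omega⟩
  have := f_aux k' t'
  convert this using 3 <;> omega
end

section
/- Let G be a graph and let S, S' be subsets of V(G). Then there exists a set X ⊆ V(G) with S' ⊆ X such that td(G, S) ≤ td(G, S') + td(G - X, S \ X). -/
open Classical

variable {V : Type}

/-- Reachability within a vertex subset `s` of the graph `G`. -/
def ReachIn (G : SimpleGraph V) (s : Finset V) (u v : V) : Prop :=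
  Relation.ReflTransGen (fun a b => a ∈ s ∧ b ∈ s ∧ G.Adj a b) u v

/-- The induced subgraph of `G` on `s` is (nonempty and) connected. -/
def ConnIn (G : SimpleGraph V) (s : Finset V) : Prop :=
  s.Nonempty ∧ ∀ u ∈ s, ∀ v ∈ s, ReachIn G s u v

/-- The vertex set of the connected component of `v` in the induced subgraph on `s`. -/
noncomputable def compIn (G : SimpleGraph V) (s : Finset V) (v : V) : Finset V :=
  s.filter (fun u => ReachIn G s v u)

/-- Fuel-based recursion computing the treedepth of the induced subgraph of `G` on `s`
(correct whenever the fuel is at least `s.card`): treedepth of the null graph is `0`;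
for a connected graph it is `1 + min_v td(G - v)`; otherwise the max over components. -/
noncomputable def tdAux (G : SimpleGraph V) : ℕ → Finset V → ℕ
  | 0, _ => 0
  | n+1, s =>
    if hs : s = ∅ then 0
    else if ConnIn G s then
      1 + s.inf' (Finset.nonempty_of_ne_empty hs) (fun v => tdAux G n (s.erase v))
    else
      s.sup (fun v => tdAux G n (compIn G s v))

/-- The treedepth of the induced subgraph of `G` on the vertex set `s`. -/
noncomputable def tdOn (G : SimpleGraph V) (s : Finset V) : ℕ := tdAux G s.card s

/-- The treedepth of a finite graph. -/
noncomputable def td (G : SimpleGraph V) [Fintype V] : ℕ := tdOn G Finset.univ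

/-- Fuel-based recursion for the set-restricted treedepth `td(G[s], S)`
(correct whenever the fuel is at least `s.card`): `0` if `S = ∅`; the max over
components `C` of `td(C, S ∩ C)` if the graph is disconnected; and
`1 + min_v td(G - v, S \ {v})` if the graph is connected. -/
noncomputable def tdSAux (G : SimpleGraph V) : ℕ → Finset V → Finset V → ℕ
  | 0, _, _ => 0
  | n+1, s, S =>
    if S = ∅ then 0
    else if hs : s = ∅ then 0
    else if ConnIn G s then
      1 + s.inf' (Finset.nonempty_of_ne_empty hs)
        (fun v => tdSAux G n (s.erase v) (S.erase v))
    else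
      s.sup (fun v => tdSAux G n (compIn G s v) (S ∩ compIn G s v))

/-- The set-restricted treedepth `td(G[s], S)`. -/
noncomputable def tdS (G : SimpleGraph V) (s S : Finset V) : ℕ := tdSAux G s.card s S

-- basic lemmas
lemma reachIn_mono {G : SimpleGraph V} {t u : Finset V} (h : t ⊆ u) {a b : V}
    (hr : ReachIn G t a b) : ReachIn G u a b :=
  Relation.ReflTransGen.mono (fun x y ⟨hx, hy, hxy⟩ => ⟨h hx, h hy, hxy⟩) a b hr

lemma reachIn_symm {G : SimpleGraph V} {s : Finset V} {a b : V}
    (hr : ReachIn G s a b) : ReachIn G s b a := by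
  have : Symmetric (fun a b => a ∈ s ∧ b ∈ s ∧ G.Adj a b) := by
    intro x y ⟨hx, hy, hxy⟩; exact ⟨hy, hx, hxy.symm⟩
  exact (@Relation.ReflTransGen.symmetric _ _ ⟨this⟩).symm _ _ hr

lemma reachIn_trans {G : SimpleGraph V} {s : Finset V} {a b c : V}
    (h1 : ReachIn G s a b) (h2 : ReachIn G s b c) : ReachIn G s a c :=
  Relation.ReflTransGen.trans h1 h2

lemma compIn_subset (G : SimpleGraph V) (s : Finset V) (v : V) : compIn G s v ⊆ s :=
  Finset.filter_subset _ _

lemma mem_compIn {G : SimpleGraph V} {s : Finset V} {v u : V} :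
    u ∈ compIn G s v ↔ u ∈ s ∧ ReachIn G s v u := Finset.mem_filter

lemma mem_compIn_self {G : SimpleGraph V} {s : Finset V} {v : V} (hv : v ∈ s) :
    v ∈ compIn G s v := mem_compIn.2 ⟨hv, Relation.ReflTransGen.refl⟩

lemma compIn_eq_of_mem {G : SimpleGraph V} {s : Finset V} {v w : V}
    (h : w ∈ compIn G s v) : compIn G s w = compIn G s v := by
  rcases mem_compIn.1 h with ⟨hw, hr⟩
  ext u
  simp only [mem_compIn]
  exact ⟨fun ⟨hu, h2⟩ => ⟨hu, reachIn_trans hr h2⟩,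
    fun ⟨hu, h2⟩ => ⟨hu, reachIn_trans (reachIn_symm hr) h2⟩⟩

lemma compIn_eq_self {G : SimpleGraph V} {s : Finset V} (hc : ConnIn G s) {v : V}
    (hv : v ∈ s) : compIn G s v = s := by
  apply Finset.Subset.antisymm (compIn_subset G s v)
  intro u hu
  exact mem_compIn.2 ⟨hu, hc.2 v hv u hu⟩

lemma compIn_ssubset {G : SimpleGraph V} {s : Finset V} (hc : ¬ ConnIn G s) {v : V}
    (hv : v ∈ s) : compIn G s v ⊂ s := by
  refine (Finset.ssubset_iff_of_subset (compIn_subset G s v)).2 ?_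
  by_contra h
  push_neg at h
  apply hc
  refine ⟨⟨v, hv⟩, fun a ha b hb => ?_⟩
  have hav : ReachIn G s v a := (mem_compIn.1 (h a ha)).2
  have hbv : ReachIn G s v b := (mem_compIn.1 (h b hb)).2
  exact reachIn_trans (reachIn_symm hav) hbv

lemma tdSAux_empty_s (G : SimpleGraph V) (m : ℕ) (S : Finset V) :
    tdSAux G m (∅ : Finset V) S = 0 := by
  cases m <;> simp [tdSAux]

lemma tdSAux_empty_S (G : SimpleGraph V) (m : ℕ) (s : Finset V) :
    tdSAux G m s (∅ : Finset V) = 0 := by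
  cases m <;> simp [tdSAux]

lemma tdSAux_fuel (G : SimpleGraph V) : ∀ n : ℕ, ∀ s S : Finset V, s.card ≤ n →
    tdSAux G n s S = tdSAux G s.card s S := by
  intro n
  induction n using Nat.strong_induction_on with
  | _ n IH =>
    intro s S hcard
    match n with
    | 0 =>
      interval_cases h : s.card
      · rfl
    | Nat.succ n =>
      by_cases hS : S = ∅
      · rw [hS, tdSAux_empty_S, tdSAux_empty_S]
      by_cases hs : s = ∅
      · rw [hs, tdSAux_empty_s, tdSAux_empty_s]
      obtain ⟨c, hc⟩ : ∃ c, s.card = c + 1 :=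
        ⟨s.card - 1, (Nat.succ_pred_eq_of_pos (Finset.card_pos.2
          (Finset.nonempty_of_ne_empty hs))).symm⟩
      rw [hc]
      show tdSAux G (n+1) s S = tdSAux G (c+1) s S
      by_cases hconn : ConnIn G s
      · simp only [tdSAux, if_neg hS, dif_neg hs, if_pos hconn]
        congr 1
        apply Finset.inf'_congr _ rfl
        intro v hv
        have hve : (s.erase v).card = c := by
          rw [Finset.card_erase_of_mem hv, hc]; omega
        have h1 : (s.erase v).card ≤ n := by
          rw [hve]; omega
        have h2 : (s.erase v).card ≤ c := by rw [hve]
        rw [IH n (by omega) _ _ h1, IH c (by omega) _ _ h2, hve]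
      · simp only [tdSAux, if_neg hS, dif_neg hs, if_neg hconn]
        apply Finset.sup_congr rfl
        intro v hv
        have hlt : (compIn G s v).card < s.card :=
          Finset.card_lt_card (compIn_ssubset hconn hv)
        have h1 : (compIn G s v).card ≤ n := by omega
        have h2 : (compIn G s v).card ≤ c := by omega
        rw [IH n (by omega) _ _ h1, IH c (by omega) _ _ h2]

lemma tdSAux_eq_tdS (G : SimpleGraph V) {n : ℕ} {s : Finset V} (S : Finset V)
    (h : s.card ≤ n) : tdSAux G n s S = tdS G s S := tdSAux_fuel G n s S h

lemma tdS_empty_S (G : SimpleGraph V) (s : Finset V) : tdS G s ∅ = 0 :=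
  tdSAux_empty_S G _ s

lemma tdS_conn {G : SimpleGraph V} {s S : Finset V} (hS : S ≠ ∅) (hc : ConnIn G s) :
    tdS G s S = 1 + s.inf' hc.1 (fun v => tdS G (s.erase v) (S.erase v)) := by
  have hs : s ≠ ∅ := Finset.nonempty_iff_ne_empty.1 hc.1
  obtain ⟨c, hcc⟩ : ∃ c, s.card = c + 1 :=
    ⟨s.card - 1, (Nat.succ_pred_eq_of_pos (Finset.card_pos.2 hc.1)).symm⟩
  rw [tdS, hcc]
  show tdSAux G (c+1) s S = _
  simp only [tdSAux, if_neg hS, dif_neg hs, if_pos hc]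
  congr 1
  apply Finset.inf'_congr _ rfl
  intro v hv
  exact tdSAux_eq_tdS G _ (by rw [Finset.card_erase_of_mem hv, hcc]; omega)

lemma tdS_disconn {G : SimpleGraph V} {s S : Finset V} (hS : S ≠ ∅) (hs : s ≠ ∅)
    (hc : ¬ ConnIn G s) :
    tdS G s S = s.sup (fun v => tdS G (compIn G s v) (S ∩ compIn G s v)) := by
  obtain ⟨c, hcc⟩ : ∃ c, s.card = c + 1 :=
    ⟨s.card - 1, (Nat.succ_pred_eq_of_pos (Finset.card_pos.2
      (Finset.nonempty_of_ne_empty hs))).symm⟩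
  rw [tdS, hcc]
  show tdSAux G (c+1) s S = _
  simp only [tdSAux, if_neg hS, dif_neg hs, if_neg hc]
  apply Finset.sup_congr rfl
  intro v hv
  have hlt : (compIn G s v).card < s.card := Finset.card_lt_card (compIn_ssubset hc hv)
  exact tdSAux_eq_tdS G _ (by omega)

lemma tdS_decomp {G : SimpleGraph V} {s S : Finset V} (hSs : S ⊆ s) :
    tdS G s S = s.sup (fun v => tdS G (compIn G s v) (S ∩ compIn G s v)) := by
  by_cases hS : S = ∅
  · subst hS
    rw [tdS_empty_S]
    symm
    apply Nat.le_zero.1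
    apply Finset.sup_le
    intro v _
    simp [tdS_empty_S]
  have hs : s ≠ ∅ := by
    intro h; subst h; exact hS (Finset.subset_empty.1 hSs)
  by_cases hconn : ConnIn G s
  · have : ∀ v ∈ s, tdS G (compIn G s v) (S ∩ compIn G s v) = tdS G s S := by
      intro v hv
      rw [compIn_eq_self hconn hv, Finset.inter_eq_left.2 hSs]
    rw [Finset.sup_congr rfl this, Finset.sup_const hconn.1]
  · exact tdS_disconn hS hs hconn

lemma tdS_mono_S (G : SimpleGraph V) : ∀ n : ℕ, ∀ s S₁ S₂ : Finset V, s.card ≤ n →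
    S₁ ⊆ S₂ → tdS G s S₁ ≤ tdS G s S₂ := by
  intro n
  induction n with
  | zero =>
    intro s S₁ S₂ hcard _
    have : s = ∅ := Finset.card_eq_zero.1 (Nat.le_zero.1 hcard)
    subst this
    simp [tdS, tdSAux_empty_s]
  | succ n IH =>
    intro s S₁ S₂ hcard hsub
    by_cases hS1 : S₁ = ∅
    · rw [hS1, tdS_empty_S]; exact Nat.zero_le _
    have hS2 : S₂ ≠ ∅ := by
      intro h; exact hS1 (Finset.subset_empty.1 (h ▸ hsub))
    by_cases hs : s = ∅
    · subst hs; simp [tdS, tdSAux_empty_s]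
    by_cases hconn : ConnIn G s
    · rw [tdS_conn hS1 hconn, tdS_conn hS2 hconn]
      apply Nat.add_le_add_left
      apply Finset.le_inf'
      intro v hv
      refine (Finset.inf'_le _ hv).trans ?_
      exact IH _ _ _ (by rw [Finset.card_erase_of_mem hv]; omega)
        (Finset.erase_subset_erase v hsub)
    · rw [tdS_disconn hS1 hs hconn, tdS_disconn hS2 hs hconn]
      apply Finset.sup_le
      intro v hv
      refine le_trans ?_ (Finset.le_sup hv)
      have hlt : (compIn G s v).card < s.card := Finset.card_lt_card (compIn_ssubset hconn hv)
      exact IH _ _ _ (by omega) (Finset.inter_subset_inter_right hsub)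

lemma compIn_closed_eq {G : SimpleGraph V} {t u : Finset V} (htu : t ⊆ u)
    (hcl : ∀ v ∈ t, compIn G u v ⊆ t) {v : V} (hv : v ∈ t) :
    compIn G t v = compIn G u v := by
  apply Finset.Subset.antisymm
  · intro z hz
    rcases mem_compIn.1 hz with ⟨hzt, hr⟩
    exact mem_compIn.2 ⟨htu hzt, reachIn_mono htu hr⟩
  · intro z hz
    rcases mem_compIn.1 hz with ⟨hzu, hr⟩
    have : z ∈ t ∧ ReachIn G t v z := by
      clear hzu hz
      induction hr with
      | refl => exact ⟨hv, Relation.ReflTransGen.refl⟩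
      | tail h1 h2 ih =>
        rcases h2 with ⟨hy, hz', hadj⟩
        rcases ih with ⟨hyt, hry⟩
        have hzt : _ ∈ t := hcl _ hyt (mem_compIn.2 ⟨hz',
          Relation.ReflTransGen.single ⟨hy, hz', hadj⟩⟩)
        exact ⟨hzt, hry.tail ⟨hyt, hzt, hadj⟩⟩
    exact mem_compIn.2 ⟨this.1, this.2⟩

lemma tdS_mono_closed {G : SimpleGraph V} {t u S : Finset V} (htu : t ⊆ u)
    (hcl : ∀ v ∈ t, compIn G u v ⊆ t) (hS : S ⊆ t) :
    tdS G t S ≤ tdS G u S := by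
  rw [tdS_decomp hS, tdS_decomp (hS.trans htu)]
  apply Finset.sup_le
  intro v hv
  rw [compIn_closed_eq htu hcl hv]
  exact Finset.le_sup (f := fun v => tdS G (compIn G u v) (S ∩ compIn G u v)) (htu hv)

lemma tdS_elim_aux (G : SimpleGraph V) : ∀ n : ℕ, ∀ s S S' : Finset V, s.card ≤ n →
    S ⊆ s → S' ⊆ s → ∃ X : Finset V, X ⊆ s ∧ S' ⊆ X ∧
      tdS G s S ≤ tdS G s S' + tdS G (s \ X) (S \ X) := by
  intro n
  induction n with
  | zero =>
    intro s S S' hcard hSs hS's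
    have hs : s = ∅ := Finset.card_eq_zero.1 (Nat.le_zero.1 hcard)
    subst hs
    refine ⟨∅, Finset.Subset.refl _, Finset.subset_empty.1 hS's ▸ Finset.Subset.refl _, ?_⟩
    simp [tdS, tdSAux_empty_s]
  | succ n IH =>
    intro s S S' hcard hSs hS's
    by_cases hS' : S' = ∅
    · subst hS'
      refine ⟨∅, Finset.empty_subset _, Finset.Subset.refl _, ?_⟩
      rw [Finset.sdiff_empty, Finset.sdiff_empty, tdS_empty_S]
      omega
    by_cases hS : S = ∅
    · refine ⟨S', hS's, Finset.Subset.refl _, ?_⟩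
      rw [hS, tdS_empty_S]
      exact Nat.zero_le _
    have hs : s ≠ ∅ := by
      intro h; exact hS' (Finset.subset_empty.1 (h ▸ hS's))
    by_cases hconn : ConnIn G s
    · -- connected case
      obtain ⟨v, hv, hveq⟩ := Finset.exists_mem_eq_inf' hconn.1
        (fun v => tdS G (s.erase v) (S'.erase v))
      obtain ⟨X', hX's, hS'X', hbound⟩ := IH (s.erase v) (S.erase v) (S'.erase v)
        (by rw [Finset.card_erase_of_mem hv]; omega)
        (Finset.erase_subset_erase v hSs) (Finset.erase_subset_erase v hS's)
      refine ⟨insert v X', ?_, ?_, ?_⟩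
      · exact Finset.insert_subset hv (hX's.trans (Finset.erase_subset v s))
      · intro u hu
        rcases eq_or_ne u v with h | h
        · exact Finset.mem_insert.2 (Or.inl h)
        · exact Finset.mem_insert.2 (Or.inr (hS'X' (Finset.mem_erase.2 ⟨h, hu⟩)))
      · have hid1 : s \ insert v X' = (s.erase v) \ X' := by
          ext x
          simp only [Finset.mem_sdiff, Finset.mem_insert, Finset.mem_erase]
          tauto
        have hid2 : S \ insert v X' = (S.erase v) \ X' := by
          ext x
          simp only [Finset.mem_sdiff, Finset.mem_insert, Finset.mem_erase]
          tauto
        rw [hid1, hid2, tdS_conn hS' hconn, hveq]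
        have h1 : tdS G s S ≤ 1 + tdS G (s.erase v) (S.erase v) := by
          rw [tdS_conn hS hconn]
          exact Nat.add_le_add_left (Finset.inf'_le _ hv) 1
        omega
    · -- disconnected case
      have H : ∀ t : Finset V, ∃ X : Finset V, t.card ≤ n → t ⊆ s →
          X ⊆ t ∧ S' ∩ t ⊆ X ∧
          tdS G t (S ∩ t) ≤ tdS G t (S' ∩ t) + tdS G (t \ X) ((S ∩ t) \ X) := by
        intro t
        by_cases ht : t.card ≤ n ∧ t ⊆ s
        · obtain ⟨X, hX1, hX2, hX3⟩ := IH t (S ∩ t) (S' ∩ t) ht.1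
            (Finset.inter_subset_right) (Finset.inter_subset_right)
          exact ⟨X, fun _ _ => ⟨hX1, hX2, hX3⟩⟩
        · exact ⟨∅, fun h1 h2 => absurd ⟨h1, h2⟩ ht⟩
      choose f hf using H
      set X : Finset V := s.biUnion (fun v => f (compIn G s v)) with hXdef
      have hcompcard : ∀ v ∈ s, (compIn G s v).card ≤ n := by
        intro v hv
        have := Finset.card_lt_card (compIn_ssubset hconn hv)
        omega
      have hfprop : ∀ v ∈ s, f (compIn G s v) ⊆ compIn G s v ∧
          S' ∩ compIn G s v ⊆ f (compIn G s v) ∧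
          tdS G (compIn G s v) (S ∩ compIn G s v) ≤
            tdS G (compIn G s v) (S' ∩ compIn G s v) +
            tdS G (compIn G s v \ f (compIn G s v))
              ((S ∩ compIn G s v) \ f (compIn G s v)) := by
        intro v hv
        exact hf _ (hcompcard v hv) (compIn_subset G s v)
      have hXs : X ⊆ s := by
        apply Finset.biUnion_subset.2
        intro v hv
        exact (hfprop v hv).1.trans (compIn_subset G s v)
      -- X ∩ compIn G s v = f (compIn G s v)
      have hXcomp : ∀ v ∈ s, ∀ x ∈ X, x ∈ compIn G s v → x ∈ f (compIn G s v) := by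
        intro v hv x hx hxc
        rcases Finset.mem_biUnion.1 hx with ⟨w, hw, hxw⟩
        have hxcw : x ∈ compIn G s w := (hfprop w hw).1 hxw
        have : compIn G s w = compIn G s v := by
          rw [← compIn_eq_of_mem hxcw, compIn_eq_of_mem hxc]
        rwa [← this]
      refine ⟨X, hXs, ?_, ?_⟩
      · intro u hu
        have hus : u ∈ s := hS's hu
        apply Finset.mem_biUnion.2 ⟨u, hus, ?_⟩
        exact (hfprop u hus).2.1 (Finset.mem_inter.2 ⟨hu, mem_compIn_self hus⟩)
      · rw [tdS_disconn hS hs hconn, tdS_disconn hS' hs hconn]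
        apply Finset.sup_le
        intro v hv
        set t := compIn G s v with htdef
        set fv := f t with hfv
        have hterm2 : tdS G (t \ fv) ((S ∩ t) \ fv) ≤ tdS G (s \ X) (S \ X) := by
          have hsub1 : t \ fv ⊆ s \ X := by
            intro x hx
            rcases Finset.mem_sdiff.1 hx with ⟨hxt, hxfv⟩
            refine Finset.mem_sdiff.2 ⟨compIn_subset G s v hxt, fun hxX => ?_⟩
            exact hxfv (hXcomp v hv x hxX hxt)
          have hcl : ∀ w ∈ t \ fv, compIn G (s \ X) w ⊆ t \ fv := by
            intro w hw z hz
            rcases Finset.mem_sdiff.1 hw with ⟨hwt, hwfv⟩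
            rcases mem_compIn.1 hz with ⟨hzsX, hrz⟩
            rcases Finset.mem_sdiff.1 hzsX with ⟨hzs, hzX⟩
            have hrz' : ReachIn G s w z := reachIn_mono (Finset.sdiff_subset) hrz
            have hzcw : z ∈ compIn G s w := mem_compIn.2 ⟨hzs, hrz'⟩
            have hcwv : compIn G s w = compIn G s v := compIn_eq_of_mem hwt
            have hzt : z ∈ t := by rw [htdef, ← hcwv]; exact hzcw
            exact Finset.mem_sdiff.2 ⟨hzt, fun hzfv => hzX
              (Finset.mem_biUnion.2 ⟨v, hv, hzfv⟩)⟩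
          have hSsub : (S ∩ t) \ fv ⊆ t \ fv :=
            Finset.sdiff_subset_sdiff Finset.inter_subset_right (Finset.Subset.refl _)
          refine (tdS_mono_closed hsub1 hcl hSsub).trans ?_
          apply tdS_mono_S G (s \ X).card _ _ _ le_rfl
          intro x hx
          rcases Finset.mem_sdiff.1 hx with ⟨hxSt, hxfv⟩
          rcases Finset.mem_inter.1 hxSt with ⟨hxS, hxt⟩
          refine Finset.mem_sdiff.2 ⟨hxS, fun hxX => hxfv (hXcomp v hv x hxX hxt)⟩
        have hterm1 : tdS G t (S' ∩ t) ≤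
            s.sup (fun v => tdS G (compIn G s v) (S' ∩ compIn G s v)) :=
          Finset.le_sup (f := fun v => tdS G (compIn G s v) (S' ∩ compIn G s v)) hv
        calc tdS G t (S ∩ t) ≤ tdS G t (S' ∩ t) + tdS G (t \ fv) ((S ∩ t) \ fv) :=
              (hfprop v hv).2.2
          _ ≤ _ := Nat.add_le_add hterm1 hterm2

theorem tdS_elimination {V : Type} [Fintype V] (G : SimpleGraph V) (S S' : Finset V) :
    ∃ X : Finset V, S' ⊆ X ∧
      tdS G Finset.univ S ≤ tdS G Finset.univ S' + tdS G (Finset.univ \ X) (S \ X) := by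
  obtain ⟨X, _, hX2, hX3⟩ := tdS_elim_aux G (Finset.univ.card) Finset.univ S S' le_rfl
    (Finset.subset_univ S) (Finset.subset_univ S')
  exact ⟨X, hX2, hX3⟩
end

section
/- For every integer t ≥ 3 and every connected P_t-free graph G, the diameter of the block-cut tree of G is at most 2(t-3). -/
open Classical

variable {V : Type}

/-- `B` induces a block-like graph: connected and with no cut vertex
(removing any vertex leaves it connected, when nonempty). -/
def IsBlockSet (G : SimpleGraph V) (B : Finset V) : Prop :=
  ConnIn G B ∧ ∀ v ∈ B, (B.erase v).Nonempty → ConnIn G (B.erase v)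

/-- `B` is a block of the induced subgraph of `G` on `s`: a maximal connected
subgraph without a cut vertex. -/
def IsBlock (G : SimpleGraph V) (s B : Finset V) : Prop :=
  B ⊆ s ∧ IsBlockSet G B ∧ ∀ B' : Finset V, B ⊆ B' → B' ⊆ s → IsBlockSet G B' → B' = B

/-- Fuel-based recursion computing the 2-treedepth of the induced subgraph of `G` on `s`
(correct whenever the fuel is at least `s.card`): `0` for the null graph;
`1 + min_v td₂(G - v)` if the graph is a block; the max over blocks otherwise. -/
noncomputable def td2Aux (G : SimpleGraph V) : ℕ → Finset V → ℕ
  | 0, _ => 0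
  | n+1, s =>
    if hs : s = ∅ then 0
    else if IsBlockSet G s then
      1 + s.inf' (Finset.nonempty_of_ne_empty hs) (fun v => td2Aux G n (s.erase v))
    else
      (s.powerset.filter (fun B => IsBlock G s B)).sup (fun B => td2Aux G n B)

/-- The 2-treedepth of the induced subgraph of `G` on `s`. -/
noncomputable def td2On (G : SimpleGraph V) (s : Finset V) : ℕ := td2Aux G s.card s

/-- The 2-treedepth of a finite graph. -/
noncomputable def td2 (G : SimpleGraph V) [Fintype V] : ℕ := td2On G Finset.univ

/-- `G` contains a path on `m` vertices as a subgraph. -/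
def HasPathOn (G : SimpleGraph V) (m : ℕ) : Prop :=
  ∃ p : Fin m → V, Function.Injective p ∧
    ∀ i : Fin m, ∀ h : i.1 + 1 < m, G.Adj (p i) (p ⟨i.1 + 1, h⟩)

/-- `G` contains an induced path on `m` vertices: `m` distinct vertices with
adjacency exactly between consecutive ones. -/
def HasInducedPathOn (G : SimpleGraph V) (m : ℕ) : Prop :=
  ∃ p : Fin m → V, Function.Injective p ∧
    ∀ i j : Fin m, G.Adj (p i) (p j) ↔ (i.1 + 1 = j.1 ∨ j.1 + 1 = i.1)

/-- `G` is `P_t`-free: it has no induced path on `t` vertices. -/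
def PtFree (G : SimpleGraph V) (t : ℕ) : Prop := ¬ HasInducedPathOn G t

/-- `v` is a cut vertex of the finite graph `G`: removing it disconnects two
vertices that were connected in `G`. -/
def IsCutVertex (G : SimpleGraph V) [Fintype V] (v : V) : Prop :=
  ∃ u w : V, u ≠ v ∧ w ≠ v ∧ ReachIn G Finset.univ u w ∧
    ¬ ReachIn G (Finset.univ.erase v) u w

/-- Vertices of the block-cut tree of `G`: blocks of `G` together with cut vertices of `G`. -/
def BCVert (G : SimpleGraph V) [Fintype V] : Type :=
  {B : Finset V // IsBlock G Finset.univ B} ⊕ {v : V // IsCutVertex G v}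

/-- The block-cut tree (forest of blocks) of `G`: a block `B` is adjacent to a
cut vertex `v` exactly when `v ∈ B`. -/
def bcTree (G : SimpleGraph V) [Fintype V] : SimpleGraph (BCVert G) where
  Adj x y := match x, y with
    | Sum.inl B, Sum.inr v => v.1 ∈ B.1
    | Sum.inr v, Sum.inl B => v.1 ∈ B.1
    | _, _ => False
  symm := ⟨by rintro (B|v) (B'|v') h <;> simp_all⟩
  loopless := ⟨by rintro (B|v) h <;> simp_all⟩

section WalkMachinery

variable {G : SimpleGraph V} {s : Finset V}

/-- Walk of length `n` inside `s`, encoded as a function. -/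
def WIn (G : SimpleGraph V) (s : Finset V) (f : ℕ → V) (n : ℕ) : Prop :=
  (∀ i ≤ n, f i ∈ s) ∧ ∀ i < n, G.Adj (f i) (f (i+1))

lemma ReachIn.symm {u v : V} (h : ReachIn G s u v) : ReachIn G s v u := by
  induction h with
  | refl => exact .refl
  | tail _ hbc ih => exact Relation.ReflTransGen.head ⟨hbc.2.1, hbc.1, hbc.2.2.symm⟩ ih

lemma ReachIn.mono {t : Finset V} (hst : s ⊆ t) {u v : V} (h : ReachIn G s u v) :
    ReachIn G t u v :=
  by
    induction h with
    | refl => exact .refl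
    | tail _ hab ih => exact ih.tail ⟨hst hab.1, hst hab.2.1, hab.2.2⟩

lemma reach_of_walk_segment {f : ℕ → V} {a b : ℕ}
    (hadj : ∀ i, a ≤ i → i < b → G.Adj (f i) (f (i+1)))
    (hmem : ∀ i, a ≤ i → i ≤ b → f i ∈ s) (hab : a ≤ b) :
    ReachIn G s (f a) (f b) := by
  induction b, hab using Nat.le_induction with
  | base => exact .refl
  | succ m ham ih =>
    refine Relation.ReflTransGen.tail
      (ih (fun i h1 h2 => hadj i h1 (h2.trans (Nat.lt_succ_self m)))
          (fun i h1 h2 => hmem i h1 (h2.trans (Nat.le_succ m)))) ?_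
    exact ⟨hmem m ham (Nat.le_succ m), hmem (m+1) (ham.trans (Nat.le_succ m)) le_rfl,
      hadj m ham (Nat.lt_succ_self m)⟩

lemma WIn.reach {f : ℕ → V} {n : ℕ} (hf : WIn G s f n) {a b : ℕ} (hab : a ≤ b) (hb : b ≤ n) :
    ReachIn G s (f a) (f b) :=
  reach_of_walk_segment (fun i _ h2 => hf.2 i (lt_of_lt_of_le h2 hb))
    (fun i _ h2 => hf.1 i (h2.trans hb)) hab

lemma win_of_reachIn {u v : V} (h : ReachIn G s u v) (hu : u ∈ s) :
    ∃ n f, WIn G s f n ∧ f 0 = u ∧ f n = v := by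
  induction h with
  | refl => exact ⟨0, fun _ => u, ⟨fun i hi => hu, fun i hi => absurd hi (Nat.not_lt_zero i)⟩,
      rfl, rfl⟩
  | @tail b c hab hbc ih =>
    obtain ⟨n, f, hf, h0, hn⟩ := ih
    refine ⟨n+1, fun i => if i ≤ n then f i else c, ⟨?_, ?_⟩, ?_, ?_⟩
    · intro i hi
      by_cases h : i ≤ n
      · simpa [h] using hf.1 i h
      · simpa [h] using hbc.2.1
    · intro i hi
      rcases Nat.lt_or_ge i n with h | h
      · simpa [Nat.le_of_lt h, Nat.succ_le_of_lt h] using hf.2 i h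
      · have hin : i = n := Nat.le_antisymm (Nat.lt_succ_iff.mp hi) h
        subst hin
        show G.Adj (if i ≤ i then f i else c) (if i + 1 ≤ i then f (i+1) else c)
        rw [if_pos le_rfl, if_neg (by omega), hn]
        exact hbc.2.2
    · simpa using h0
    · simp [Nat.not_le.mpr (Nat.lt_succ_self n)]

/-- Existence of a minimal-length walk in `s`. -/
lemma exists_min_walk {u v : V} (hu : u ∈ s) (h : ReachIn G s u v) :
    ∃ n f, WIn G s f n ∧ f 0 = u ∧ f n = v ∧
      ∀ m g, WIn G s g m → g 0 = u → g m = v → n ≤ m := by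
  have hex : ∃ n, ∃ f, WIn G s f n ∧ f 0 = u ∧ f n = v := by
    obtain ⟨n, f, h1, h2, h3⟩ := win_of_reachIn h hu
    exact ⟨n, f, h1, h2, h3⟩
  classical
  obtain ⟨f, hf, h0, hn⟩ := Nat.find_spec hex
  exact ⟨Nat.find hex, f, hf, h0, hn, fun m g hg hg0 hgm =>
    Nat.find_min' hex ⟨g, hg, hg0, hgm⟩⟩

/-- Shortcutting a walk: if `f i = f j` or there is a chord, we get a strictly shorter walk. -/
lemma walk_shorten {f : ℕ → V} {n i j : ℕ} (hf : WIn G s f n) (hij : i < j) (hj : j ≤ n)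
    (h : f i = f j ∨ (G.Adj (f i) (f j) ∧ i + 1 < j)) :
    ∃ m g, WIn G s g m ∧ g 0 = f 0 ∧ g m = f n ∧ m < n := by
  rcases h with h | h
  · -- remove the cycle between i and j
    obtain ⟨d, hd1, hd⟩ : ∃ d, 1 ≤ d ∧ j = i + d := ⟨j - i, by omega, by omega⟩
    refine ⟨n - d, fun k => if k ≤ i then f k else f (k + d), ⟨?_, ?_⟩, ?_, ?_, by omega⟩
    · intro k hk
      by_cases hki : k ≤ i
      · simpa [hki] using hf.1 k (by omega)
      · simpa [hki] using hf.1 (k + d) (by omega)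
    · intro k hk
      by_cases hki : k + 1 ≤ i
      · simpa [hki, show k ≤ i by omega] using hf.2 k (by omega)
      · have hki' : ¬ (k + 1 ≤ i) := hki
        by_cases hk2 : k ≤ i
        · -- k = i
          have : k = i := by omega
          subst this
          simp only [le_rfl, if_pos, if_neg hki']
          have : f (k + 1 + d) = f (j + 1) := by congr 1; omega
          rw [this]
          have : f k = f j := h
          rw [this]
          exact hf.2 j (by omega)
        · simp only [if_neg hk2, if_neg hki']
          have e1 : k + 1 + d = (k + d) + 1 := by omega
          rw [e1]
          exact hf.2 (k + d) (by omega)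
    · simp
    · show (if n - d ≤ i then f (n - d) else f (n - d + d)) = f n
      by_cases hm : n - d ≤ i
      · have e0 : n - d = i := by omega
        have e1 : j = n := by omega
        rw [if_pos hm, e0, h, e1]
      · rw [if_neg hm]
        have e : n - d + d = n := by omega
        rw [e]
  · -- use the chord
    obtain ⟨hadj, hij2⟩ := h
    obtain ⟨d, hd1, hd⟩ : ∃ d, 1 ≤ d ∧ j = i + d + 1 := ⟨j - i - 1, by omega, by omega⟩
    refine ⟨n - d, fun k => if k ≤ i then f k else f (k + d), ⟨?_, ?_⟩, ?_, ?_, by omega⟩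
    · intro k hk
      by_cases hki : k ≤ i
      · simpa [hki] using hf.1 k (by omega)
      · simpa [hki] using hf.1 (k + d) (by omega)
    · intro k hk
      by_cases hki : k + 1 ≤ i
      · simpa [hki, show k ≤ i by omega] using hf.2 k (by omega)
      · have hki' : ¬ (k + 1 ≤ i) := hki
        by_cases hk2 : k ≤ i
        · have : k = i := by omega
          subst this
          simp only [le_rfl, if_pos, if_neg hki']
          have : f (k + 1 + d) = f j := by congr 1; omega
          rw [this]
          exact hadj
        · simp only [if_neg hk2, if_neg hki']
          have e1 : k + 1 + d = (k + d) + 1 := by omega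
          rw [e1]
          exact hf.2 (k + d) (by omega)
    · simp
    · show (if n - d ≤ i then f (n - d) else f (n - d + d)) = f n
      have hm : ¬ (n - d ≤ i) := by omega
      rw [if_neg hm]
      have e : n - d + d = n := by omega
      rw [e]

/-- A minimal walk is injective and induced. -/
lemma min_walk_good {f : ℕ → V} {n : ℕ} {u v : V} (hf : WIn G s f n) (h0 : f 0 = u)
    (hn : f n = v) (hmin : ∀ m g, WIn G s g m → g 0 = u → g m = v → n ≤ m) :
    (∀ i ≤ n, ∀ j ≤ n, f i = f j → i = j) ∧
      (∀ i j, i + 1 < j → j ≤ n → ¬ G.Adj (f i) (f j)) := by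
  constructor
  · intro i hi j hj hij
    by_contra hne
    rcases Nat.lt_or_ge i j with hlt | hge
    · obtain ⟨m, g, hg, hg0, hgm, hmn⟩ := walk_shorten hf hlt hj (Or.inl hij)
      exact absurd (hmin m g hg (hg0.trans h0) (hgm.trans hn)) (by omega)
    · have hlt : j < i := by omega
      obtain ⟨m, g, hg, hg0, hgm, hmn⟩ := walk_shorten hf hlt hi (Or.inl hij.symm)
      exact absurd (hmin m g hg (hg0.trans h0) (hgm.trans hn)) (by omega)
  · intro i j hij hj hadj
    obtain ⟨m, g, hg, hg0, hgm, hmn⟩ := walk_shorten hf (by omega) hj (Or.inr ⟨hadj, hij⟩)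
    exact absurd (hmin m g hg (hg0.trans h0) (hgm.trans hn)) (by omega)

end WalkMachinery
section BlockLemmas

variable {G : SimpleGraph V}

lemma connIn_singleton (G : SimpleGraph V) (a : V) : ConnIn G {a} := by
  refine ⟨⟨a, Finset.mem_singleton_self a⟩, ?_⟩
  intro u hu v hv
  rw [Finset.mem_singleton] at hu hv
  subst hu; subst hv
  exact .refl

lemma pair_blockset {a b : V} (hab : G.Adj a b) : IsBlockSet G {a, b} := by
  have hne : a ≠ b := hab.ne
  constructor
  · refine ⟨⟨a, by simp⟩, ?_⟩
    have step : ReachIn G {a, b} a b :=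
      Relation.ReflTransGen.single ⟨by simp, by simp, hab⟩
    intro u hu v hv
    simp only [Finset.mem_insert, Finset.mem_singleton] at hu hv
    rcases hu with rfl | rfl <;> rcases hv with rfl | rfl
    exacts [.refl, step, step.symm, .refl]
  · intro v hv _
    simp only [Finset.mem_insert, Finset.mem_singleton] at hv
    rcases hv with rfl | rfl
    · rw [show ({v, b} : Finset V).erase v = {b} by
        rw [Finset.erase_insert (by simp [hne])]]
      exact connIn_singleton G b
    · rw [show ({a, v} : Finset V).erase v = {a} by
        rw [Finset.pair_comm, Finset.erase_insert (by simp [Ne.symm hne])]]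
      exact connIn_singleton G a

lemma exists_block_superset [Fintype V] {B : Finset V} (hB : IsBlockSet G B) :
    ∃ C, B ⊆ C ∧ IsBlock G Finset.univ C := by
  suffices h : ∀ k (B : Finset V), Fintype.card V - B.card ≤ k → IsBlockSet G B →
      ∃ C, B ⊆ C ∧ IsBlock G Finset.univ C from h _ B le_rfl hB
  intro k
  induction k with
  | zero =>
    intro B hcard hB
    have hcard2 : B.card = Fintype.card V :=
      le_antisymm (by simpa using Finset.card_le_univ B) (by omega)
    have huniv : B = Finset.univ := Finset.eq_univ_of_card B hcard2
    refine ⟨B, subset_rfl, Finset.subset_univ B, hB, ?_⟩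
    intro B' h1 h2 _
    exact subset_antisymm (h2.trans (huniv ▸ subset_rfl)) h1
  | succ k ih =>
    intro B hcard hB
    by_cases hmax : ∀ C, B ⊆ C → IsBlockSet G C → C = B
    · exact ⟨B, subset_rfl, Finset.subset_univ B, hB, fun B' h1 _ h3 => hmax B' h1 h3⟩
    · push_neg at hmax
      obtain ⟨C, hBC, hCbs, hCne⟩ := hmax
      have hss : B ⊂ C := HasSubset.Subset.ssubset_of_ne hBC (Ne.symm hCne)
      have hlt : B.card < C.card := Finset.card_lt_card hss
      have hCle : C.card ≤ Fintype.card V := by simpa using Finset.card_le_univ C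
      obtain ⟨D, hCD, hD⟩ := ih C (by omega) hCbs
      exact ⟨D, hBC.trans hCD, hD⟩

lemma exists_block_of_adj [Fintype V] {a b : V} (hab : G.Adj a b) :
    ∃ B, IsBlock G Finset.univ B ∧ a ∈ B ∧ b ∈ B := by
  obtain ⟨C, hsub, hC⟩ := exists_block_superset (pair_blockset hab)
  exact ⟨C, hC, hsub (by simp), hsub (by simp)⟩

lemma block_not_subset [Fintype V] {B B' : Finset V} (hB : IsBlock G Finset.univ B)
    (hB' : IsBlock G Finset.univ B') (hne : B ≠ B') : ∃ x ∈ B, x ∉ B' := by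
  by_contra h
  push_neg at h
  exact hne (hB.2.2 B' h (Finset.subset_univ _) hB'.2.1).symm

lemma cut_of_mem_two_blocks [Fintype V] {B B' : Finset V} (hB : IsBlock G Finset.univ B)
    (hB' : IsBlock G Finset.univ B') (hne : B ≠ B') {u : V} (hu : u ∈ B) (hu' : u ∈ B') :
    IsCutVertex G u := by
  obtain ⟨b, hbB, hbB'⟩ := block_not_subset hB hB' hne
  obtain ⟨b', hb'B', hb'B⟩ := block_not_subset hB' hB (Ne.symm hne)
  have hbu : b ≠ u := fun h => hbB' (h ▸ hu')
  have hb'u : b' ≠ u := fun h => hb'B (h ▸ hu)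
  have hreach : ReachIn G Finset.univ b b' :=
    ((hB.2.1.1.2 b hbB u hu).mono (Finset.subset_univ _)).trans
      ((hB'.2.1.1.2 u hu' b' hb'B').mono (Finset.subset_univ _))
  refine ⟨b, b', hbu, hb'u, hreach, ?_⟩
  intro hre
  have hbE : b ∈ Finset.univ.erase u := Finset.mem_erase.mpr ⟨hbu, Finset.mem_univ b⟩
  obtain ⟨n, f, hf, h0, hn, hmin⟩ := exists_min_walk hbE hre
  obtain ⟨hinj, _⟩ := min_walk_good hf h0 hn hmin
  set S := (B ∪ B') ∪ (Finset.range (n + 1)).image f with hS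
  have hfS : ∀ i ≤ n, f i ∈ S := fun i hi =>
    Finset.mem_union_right _ (Finset.mem_image.mpr ⟨i, Finset.mem_range.mpr (by omega), rfl⟩)
  have hfu : ∀ i ≤ n, f i ≠ u := fun i hi => (Finset.mem_erase.mp (hf.1 i hi)).1
  have hBS : B ⊆ S := fun x hx => Finset.mem_union_left _ (Finset.mem_union_left _ hx)
  have hB'S : B' ⊆ S := fun x hx => Finset.mem_union_left _ (Finset.mem_union_right _ hx)
  have huS : u ∈ S := hBS hu
  have hSmem : ∀ x ∈ S, (x ∈ B ∨ x ∈ B') ∨ ∃ k ≤ n, f k = x := by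
    intro x hx
    rcases Finset.mem_union.mp hx with h | h
    · exact Or.inl (Finset.mem_union.mp h)
    · obtain ⟨k, hk, hfk⟩ := Finset.mem_image.mp h
      exact Or.inr ⟨k, Nat.lt_succ_iff.mp (Finset.mem_range.mp hk), hfk⟩
  -- connectivity of S
  have hwalkS : WIn G S f n := ⟨hfS, hf.2⟩
  have hconnS : ConnIn G S := by
    refine ⟨⟨u, huS⟩, ?_⟩
    have hto : ∀ x ∈ S, ReachIn G S x u := by
      intro x hx
      rcases hSmem x hx with (h | h) | ⟨k, hk, rfl⟩
      · exact (hB.2.1.1.2 x h u hu).mono hBS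
      · exact (hB'.2.1.1.2 x h u hu').mono hB'S
      · exact (hwalkS.reach hk le_rfl).trans ((hn ▸ hB'.2.1.1.2 b' hb'B' u hu' : _).mono hB'S)
    intro x hx y hy
    exact (hto x hx).trans (hto y hy).symm
  -- no cut vertex in S
  have herase : ∀ x ∈ S, (S.erase x).Nonempty → ConnIn G (S.erase x) := by
    intro x hxS _
    by_cases hxu : x = u
    · subst hxu
      have hbSx : b ∈ S.erase x := Finset.mem_erase.mpr ⟨hbu, hBS hbB⟩
      have hwx : WIn G (S.erase x) f n :=
        ⟨fun i hi => Finset.mem_erase.mpr ⟨hfu i hi, hfS i hi⟩, hf.2⟩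
      have hb'b : ReachIn G (S.erase x) b' b := by
        have := (hwx.reach (Nat.zero_le n) le_rfl).symm
        rwa [h0, hn] at this
      have hBsub : B.erase x ⊆ S.erase x := Finset.erase_subset_erase x hBS
      have hB'sub : B'.erase x ⊆ S.erase x := Finset.erase_subset_erase x hB'S
      have hCB : ConnIn G (B.erase x) :=
        hB.2.1.2 x hu ⟨b, Finset.mem_erase.mpr ⟨hbu, hbB⟩⟩
      have hCB' : ConnIn G (B'.erase x) :=
        hB'.2.1.2 x hu' ⟨b', Finset.mem_erase.mpr ⟨hb'u, hb'B'⟩⟩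
      have hto : ∀ y ∈ S.erase x, ReachIn G (S.erase x) y b := by
        intro y hy
        obtain ⟨hyx, hyS⟩ := Finset.mem_erase.mp hy
        rcases hSmem y hyS with (h | h) | ⟨k, hk, rfl⟩
        · exact (hCB.2 y (Finset.mem_erase.mpr ⟨hyx, h⟩) b
            (Finset.mem_erase.mpr ⟨hbu, hbB⟩)).mono hBsub
        · exact ((hCB'.2 y (Finset.mem_erase.mpr ⟨hyx, h⟩) b'
            (Finset.mem_erase.mpr ⟨hb'u, hb'B'⟩)).mono hB'sub).trans hb'b
        · exact ((hwx.reach hk le_rfl).trans (hn ▸ hb'b : _))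
      exact ⟨⟨b, hbSx⟩, fun y hy z hz => (hto y hy).trans (hto z hz).symm⟩
    · have hux : u ≠ x := Ne.symm hxu
      have huSx : u ∈ S.erase x := Finset.mem_erase.mpr ⟨hux, huS⟩
      -- helper: from a vertex of B (resp. B') different from x, reach u
      have hBhelp : ∀ y ∈ B, y ≠ x → ReachIn G (S.erase x) y u := by
        intro y hyB hyx
        by_cases hxB : x ∈ B
        · have hCB : ConnIn G (B.erase x) := hB.2.1.2 x hxB ⟨u, Finset.mem_erase.mpr ⟨hux, hu⟩⟩
          exact (hCB.2 y (Finset.mem_erase.mpr ⟨hyx, hyB⟩) u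
            (Finset.mem_erase.mpr ⟨hux, hu⟩)).mono (Finset.erase_subset_erase x hBS)
        · have hBsub : B ⊆ S.erase x := fun z hz =>
            Finset.mem_erase.mpr ⟨fun h => hxB (h ▸ hz), hBS hz⟩
          exact (hB.2.1.1.2 y hyB u hu).mono hBsub
      have hB'help : ∀ y ∈ B', y ≠ x → ReachIn G (S.erase x) y u := by
        intro y hyB hyx
        by_cases hxB : x ∈ B'
        · have hCB : ConnIn G (B'.erase x) :=
            hB'.2.1.2 x hxB ⟨u, Finset.mem_erase.mpr ⟨hux, hu'⟩⟩
          exact (hCB.2 y (Finset.mem_erase.mpr ⟨hyx, hyB⟩) u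
            (Finset.mem_erase.mpr ⟨hux, hu'⟩)).mono (Finset.erase_subset_erase x hB'S)
        · have hBsub : B' ⊆ S.erase x := fun z hz =>
            Finset.mem_erase.mpr ⟨fun h => hxB (h ▸ hz), hB'S hz⟩
          exact (hB'.2.1.1.2 y hyB u hu').mono hBsub
      have hto : ∀ y ∈ S.erase x, ReachIn G (S.erase x) y u := by
        intro y hy
        obtain ⟨hyx, hyS⟩ := Finset.mem_erase.mp hy
        rcases hSmem y hyS with (h | h) | ⟨k', hk', rfl⟩
        · exact hBhelp y h hyx
        · exact hB'help y h hyx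
        · by_cases hxw : ∃ k ≤ n, f k = x
          · obtain ⟨k, hk, hfk⟩ := hxw
            have huniq : ∀ i ≤ n, i ≠ k → f i ≠ x := fun i hi hik he =>
              hik (hinj i hi k hk (he.trans hfk.symm))
            have hk'k : k' ≠ k := fun h => hyx (h ▸ hfk ▸ rfl)
            rcases Nat.lt_or_ge k' k with hlt | hge
            · -- prefix avoids x; go to b = f 0 then through B
              have hseg : ReachIn G (S.erase x) (f 0) (f k') :=
                reach_of_walk_segment (fun i _ h2 => hf.2 i (by omega))
                  (fun i _ h2 => Finset.mem_erase.mpr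
                    ⟨huniq i (by omega) (by omega), hfS i (by omega)⟩) (Nat.zero_le k')
              have hb0 : f 0 = b := h0
              have hbx : b ≠ x := hb0 ▸ huniq 0 (Nat.zero_le n) (by omega)
              exact hseg.symm.trans (hb0 ▸ hBhelp b hbB hbx : _)
            · have hlt : k < k' := by omega
              have hseg : ReachIn G (S.erase x) (f k') (f n) :=
                reach_of_walk_segment (fun i h1 h2 => hf.2 i (by omega))
                  (fun i h1 h2 => Finset.mem_erase.mpr
                    ⟨huniq i (by omega) (by omega), hfS i (by omega)⟩) hk'
              have hbx : b' ≠ x := hn ▸ huniq n le_rfl (by omega)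
              exact hseg.trans (hn ▸ hB'help b' hb'B' hbx : _)
          · push_neg at hxw
            have hseg : ReachIn G (S.erase x) (f 0) (f k') :=
              reach_of_walk_segment (fun i _ h2 => hf.2 i (by omega))
                (fun i _ h2 => Finset.mem_erase.mpr ⟨hxw i (by omega), hfS i (by omega)⟩)
                (Nat.zero_le k')
            have hbx : b ≠ x := h0 ▸ hxw 0 (Nat.zero_le n)
            exact hseg.symm.trans (h0 ▸ hBhelp b hbB hbx : _)
      exact ⟨⟨u, huSx⟩, fun y hy z hz => (hto y hy).trans (hto z hz).symm⟩
  have hSbs : IsBlockSet G S := ⟨hconnS, herase⟩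
  have hSB : S = B := hB.2.2 S hBS (Finset.subset_univ S) hSbs
  exact hb'B (hSB ▸ hB'S hb'B')

end BlockLemmas
section CutLemmas

variable {G : SimpleGraph V}

lemma reach_univ [Fintype V] (hconn : G.Connected) (u v : V) : ReachIn G Finset.univ u v := by
  obtain ⟨p⟩ := hconn.preconnected u v
  induction p with
  | nil => exact .refl
  | cons h _ ih =>
    exact Relation.ReflTransGen.head ⟨Finset.mem_univ _, Finset.mem_univ _, h⟩ ih

lemma attach_neighbor [Fintype V] (hconn : G.Connected) {v z : V} (hz : z ≠ v) :
    ∃ y, G.Adj v y ∧ ReachIn G (Finset.univ.erase v) z y := by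
  have hr : ReachIn G Finset.univ z v := reach_univ hconn z v
  obtain ⟨n, f, hf, h0, hn, hmin⟩ := exists_min_walk (Finset.mem_univ z) hr
  obtain ⟨hinj, _⟩ := min_walk_good hf h0 hn hmin
  have hn1 : 1 ≤ n := by
    rcases Nat.eq_zero_or_pos n with h | h
    · exact absurd (h0.symm.trans (h ▸ hn)) hz
    · exact h
  refine ⟨f (n - 1), ?_, ?_⟩
  · have hadj := hf.2 (n - 1) (by omega)
    rw [show n - 1 + 1 = n by omega, hn] at hadj
    exact hadj.symm
  · have hseg : ReachIn G (Finset.univ.erase v) (f 0) (f (n - 1)) :=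
      reach_of_walk_segment (fun i _ h2 => hf.2 i (by omega))
        (fun i _ h2 => Finset.mem_erase.mpr
          ⟨fun he => absurd (hinj i (by omega) n le_rfl (he.trans hn.symm)) (by omega),
            Finset.mem_univ _⟩) (Nat.zero_le _)
    rwa [h0] at hseg

lemma cut_choose [Fintype V] (hconn : G.Connected) {v : V} (hv : IsCutVertex G v) (x₁ : V) :
    ∃ y, G.Adj v y ∧ ¬ ReachIn G (Finset.univ.erase v) y x₁ := by
  obtain ⟨u, w, hu, hw, _, hsep⟩ := hv
  obtain ⟨y₁, hy₁, hr₁⟩ := attach_neighbor hconn hu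
  obtain ⟨y₂, hy₂, hr₂⟩ := attach_neighbor hconn hw
  by_cases h1 : ReachIn G (Finset.univ.erase v) y₁ x₁
  · refine ⟨y₂, hy₂, fun h2 => hsep ?_⟩
    exact ((hr₁.trans h1).trans h2.symm).trans hr₂.symm
  · exact ⟨y₁, hy₁, h1⟩

lemma cut_dist [Fintype V] {t : ℕ} (ht : 3 ≤ t) (hfree : PtFree G t) (hconn : G.Connected)
    {v w : V} (hv : IsCutVertex G v) {f : ℕ → V} {n : ℕ}
    (hf : WIn G Finset.univ f n) (h0 : f 0 = v) (hn : f n = w)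
    (hmin : ∀ m g, WIn G Finset.univ g m → g 0 = v → g m = w → n ≤ m) :
    n ≤ t - 3 := by
  by_contra hcon
  have hnt : t - 2 ≤ n := by omega
  have h1n : 1 ≤ n := by omega
  obtain ⟨hinj, hind⟩ := min_walk_good hf h0 hn hmin
  obtain ⟨y, hy, hyr⟩ := cut_choose hconn hv (f 1)
  have hyv : y ≠ v := hy.ne'
  have hfne : ∀ r, 1 ≤ r → r ≤ n → f r ≠ v := fun r h1 h2 he =>
    absurd (hinj r h2 0 (Nat.zero_le n) (he.trans h0.symm)) (by omega)
  have hkey : ∀ r, 1 ≤ r → r ≤ n → ReachIn G (Finset.univ.erase v) (f r) (f 1) :=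
    fun r h1 h2 => (reach_of_walk_segment (fun i hi1 hi2 => hf.2 i (by omega))
      (fun i hi1 hi2 => Finset.mem_erase.mpr
        ⟨hfne i (by omega) (by omega), Finset.mem_univ _⟩) h1).symm
  have hsub : ∀ r, 1 ≤ r → r ≤ n → ¬ G.Adj y (f r) ∧ y ≠ f r := by
    intro r h1 h2
    constructor
    · intro hadj
      exact hyr ((Relation.ReflTransGen.single
        ⟨Finset.mem_erase.mpr ⟨hyv, Finset.mem_univ _⟩,
         Finset.mem_erase.mpr ⟨hfne r h1 h2, Finset.mem_univ _⟩, hadj⟩).trans (hkey r h1 h2))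
    · intro he
      have hk := hkey r h1 h2
      rw [← he] at hk
      exact hyr hk
  set p : Fin t → V := fun i => if i.1 = 0 then y else f (i.1 - 1) with hp
  have hp0 : ∀ i : Fin t, i.1 = 0 → p i = y := by intro i hi; simp [hp, hi]
  have hpm : ∀ i : Fin t, i.1 ≠ 0 → p i = f (i.1 - 1) := by intro i hi; simp [hp, hi]
  refine hfree ⟨p, ?_, ?_⟩
  · intro i j hij
    have hit := i.isLt; have hjt := j.isLt
    by_cases hi : i.1 = 0 <;> by_cases hj : j.1 = 0
    · exact Fin.ext (hi.trans hj.symm)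
    · exfalso
      rw [hp0 i hi, hpm j hj] at hij
      rcases Nat.eq_zero_or_pos (j.1 - 1) with h | h
      · rw [h, h0] at hij; exact hyv hij
      · exact (hsub (j.1 - 1) h (by omega)).2 hij
    · exfalso
      rw [hpm i hi, hp0 j hj] at hij
      rcases Nat.eq_zero_or_pos (i.1 - 1) with h | h
      · rw [h, h0] at hij; exact hyv hij.symm
      · exact (hsub (i.1 - 1) h (by omega)).2 hij.symm
    · rw [hpm i hi, hpm j hj] at hij
      have := hinj (i.1 - 1) (by omega) (j.1 - 1) (by omega) hij
      exact Fin.ext (by omega)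
  · intro i j
    have hit := i.isLt; have hjt := j.isLt
    by_cases hi : i.1 = 0 <;> by_cases hj : j.1 = 0
    · rw [hp0 i hi, hp0 j hj]
      exact iff_of_false (G.irrefl) (by omega)
    · rw [hp0 i hi, hpm j hj]
      by_cases hj1 : j.1 = 1
      · rw [hj1, show (1 : ℕ) - 1 = 0 from rfl, h0]
        exact iff_of_true hy.symm (by omega)
      · exact iff_of_false (hsub (j.1 - 1) (by omega) (by omega)).1 (by omega)
    · rw [hpm i hi, hp0 j hj]
      by_cases hi1 : i.1 = 1
      · rw [hi1, show (1 : ℕ) - 1 = 0 from rfl, h0]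
        exact iff_of_true hy (by omega)
      · refine iff_of_false (fun h => (hsub (i.1 - 1) (by omega) (by omega)).1 h.symm) (by omega)
    · rw [hpm i hi, hpm j hj]
      constructor
      · intro h
        have hab : i.1 - 1 ≠ j.1 - 1 := fun he => G.irrefl (he ▸ h)
        rcases Nat.lt_or_ge (i.1 - 1) (j.1 - 1) with hlt | hge
        · by_cases hc : i.1 - 1 + 1 = j.1 - 1
          · omega
          · exact absurd h (hind (i.1 - 1) (j.1 - 1) (by omega) (by omega))
        · by_cases hc : j.1 - 1 + 1 = i.1 - 1
          · omega
          · exact absurd h.symm (hind (j.1 - 1) (i.1 - 1) (by omega) (by omega))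
      · intro h
        rcases h with h | h
        · have he : j.1 - 1 = i.1 - 1 + 1 := by omega
          rw [he]
          exact hf.2 (i.1 - 1) (by omega)
        · have he : i.1 - 1 = j.1 - 1 + 1 := by omega
          rw [he]
          exact (hf.2 (j.1 - 1) (by omega)).symm

lemma cut_t4 [Fintype V] {t : ℕ} (ht : 3 ≤ t) (hfree : PtFree G t) (hconn : G.Connected)
    {v : V} (hv : IsCutVertex G v) : 4 ≤ t := by
  obtain ⟨u, w, hu, hw, hr, hsep⟩ := hv
  obtain ⟨n, f, hf, h0, hn, hmin⟩ := exists_min_walk (Finset.mem_univ v) (reach_univ hconn v u)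
  have hn3 : n ≤ t - 3 := cut_dist ht hfree hconn ⟨u, w, hu, hw, hr, hsep⟩ hf h0 hn hmin
  have h1n : 1 ≤ n := by
    rcases Nat.eq_zero_or_pos n with h | h
    · exact absurd (h0.symm.trans (h ▸ hn)).symm hu
    · exact h
  omega

lemma cut_dist2 [Fintype V] {t : ℕ} (ht : 3 ≤ t) (hfree : PtFree G t) (hconn : G.Connected)
    {v v' : V} (hv : IsCutVertex G v) (hv' : IsCutVertex G v') (hne : v ≠ v')
    {f : ℕ → V} {n : ℕ} (hf : WIn G Finset.univ f n) (h0 : f 0 = v) (hn : f n = v')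
    (hmin : ∀ m g, WIn G Finset.univ g m → g 0 = v → g m = v' → n ≤ m) :
    n + 4 ≤ t := by
  have hn3 : n ≤ t - 3 := cut_dist ht hfree hconn hv hf h0 hn hmin
  have h1n : 1 ≤ n := by
    rcases Nat.eq_zero_or_pos n with h | h
    · exact absurd (h0.symm.trans (h ▸ hn)) hne
    · exact h
  have ht4 : 4 ≤ t := by omega
  by_cases hlast : n + 4 ≤ t
  · exact hlast
  exfalso
  have hneq : n = t - 3 := by omega
  obtain ⟨hinj, hind⟩ := min_walk_good hf h0 hn hmin
  obtain ⟨y, hy, hyr⟩ := cut_choose hconn hv (f 1)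
  obtain ⟨y', hy', hy'r⟩ := cut_choose hconn hv' (f (n - 1))
  have hyv : y ≠ v := hy.ne'
  have hy'v' : y' ≠ v' := hy'.ne'
  have hfne : ∀ r, 1 ≤ r → r ≤ n → f r ≠ v := fun r h1 h2 he =>
    absurd (hinj r h2 0 (Nat.zero_le n) (he.trans h0.symm)) (by omega)
  have hfne' : ∀ r, r ≤ n - 1 → f r ≠ v' := fun r h2 he =>
    absurd (hinj r (by omega) n le_rfl (he.trans hn.symm)) (by omega)
  have hkey : ∀ r, 1 ≤ r → r ≤ n → ReachIn G (Finset.univ.erase v) (f r) (f 1) :=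
    fun r h1 h2 => (reach_of_walk_segment (fun i hi1 hi2 => hf.2 i (by omega))
      (fun i hi1 hi2 => Finset.mem_erase.mpr
        ⟨hfne i (by omega) (by omega), Finset.mem_univ _⟩) h1).symm
  have hkey' : ∀ r, r ≤ n - 1 → ReachIn G (Finset.univ.erase v') (f r) (f (n - 1)) :=
    fun r h2 => reach_of_walk_segment (fun i hi1 hi2 => hf.2 i (by omega))
      (fun i hi1 hi2 => Finset.mem_erase.mpr
        ⟨hfne' i (by omega), Finset.mem_univ _⟩) h2
  have hsub : ∀ r, 1 ≤ r → r ≤ n → ¬ G.Adj y (f r) ∧ y ≠ f r := by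
    intro r h1 h2
    constructor
    · intro hadj
      exact hyr ((Relation.ReflTransGen.single
        ⟨Finset.mem_erase.mpr ⟨hyv, Finset.mem_univ _⟩,
         Finset.mem_erase.mpr ⟨hfne r h1 h2, Finset.mem_univ _⟩, hadj⟩).trans (hkey r h1 h2))
    · intro he
      have hk := hkey r h1 h2
      rw [← he] at hk
      exact hyr hk
  have hsub' : ∀ r, r ≤ n - 1 → ¬ G.Adj y' (f r) ∧ y' ≠ f r := by
    intro r h2
    constructor
    · intro hadj
      exact hy'r ((Relation.ReflTransGen.single
        ⟨Finset.mem_erase.mpr ⟨hy'v', Finset.mem_univ _⟩,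
         Finset.mem_erase.mpr ⟨hfne' r h2, Finset.mem_univ _⟩, hadj⟩).trans (hkey' r h2))
    · intro he
      have hk := hkey' r h2
      rw [← he] at hk
      exact hy'r hk
  have hy'v : y' ≠ v := by
    intro he
    have hk := hkey' 0 (by omega)
    rw [h0, ← he] at hk
    exact hy'r hk
  have hyy' : y ≠ y' := by
    intro he
    have hadj : G.Adj y (f n) := by rw [hn, he]; exact hy'.symm
    have step : ReachIn G (Finset.univ.erase v) y (f n) :=
      Relation.ReflTransGen.single ⟨Finset.mem_erase.mpr ⟨hyv, Finset.mem_univ _⟩,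
        Finset.mem_erase.mpr ⟨hfne n h1n le_rfl, Finset.mem_univ _⟩, hadj⟩
    exact hyr (step.trans (hkey n h1n le_rfl))
  have hyadj : ¬ G.Adj y y' := by
    intro hadj
    have hadj2 : G.Adj y' (f n) := by rw [hn]; exact hy'.symm
    have s1 : ReachIn G (Finset.univ.erase v) y y' :=
      Relation.ReflTransGen.single ⟨Finset.mem_erase.mpr ⟨hyv, Finset.mem_univ _⟩,
        Finset.mem_erase.mpr ⟨hy'v, Finset.mem_univ _⟩, hadj⟩
    have s2 : ReachIn G (Finset.univ.erase v) y' (f n) :=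
      Relation.ReflTransGen.single ⟨Finset.mem_erase.mpr ⟨hy'v, Finset.mem_univ _⟩,
        Finset.mem_erase.mpr ⟨hfne n h1n le_rfl, Finset.mem_univ _⟩, hadj2⟩
    exact hyr ((s1.trans s2).trans (hkey n h1n le_rfl))
  set p : Fin t → V :=
    fun i => if i.1 = 0 then y else if i.1 = t - 1 then y' else f (i.1 - 1) with hp
  have hp0 : ∀ i : Fin t, i.1 = 0 → p i = y := by intro i hi; simp [hp, hi]
  have hpl : ∀ i : Fin t, i.1 = t - 1 → p i = y' := by
    intro i hi
    have h1 : ¬ i.1 = 0 := by omega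
    have h2 : ¬ (t - 1 = 0) := by omega
    simp [hp, hi, h1, h2]
  have hpm : ∀ i : Fin t, i.1 ≠ 0 → i.1 ≠ t - 1 → p i = f (i.1 - 1) := by
    intro i hi hj; simp [hp, hi, hj]
  -- basic comparisons of y, y' with the path vertices
  have hyf : ∀ r, r ≤ n → y ≠ f r := by
    intro r hr
    rcases Nat.eq_zero_or_pos r with h | h
    · subst h; rw [h0]; exact hyv
    · exact (hsub r h hr).2
  have hy'f : ∀ r, r ≤ n → y' ≠ f r := by
    intro r hr
    by_cases h : r = n
    · subst h; rw [hn]; exact hy'v'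
    · exact (hsub' r (by omega)).2
  have tri : ∀ i : Fin t, i.1 = 0 ∨ i.1 = t - 1 ∨ (i.1 ≠ 0 ∧ i.1 ≠ t - 1) := by
    intro i; omega
  refine hfree ⟨p, ?_, ?_⟩
  · intro i j hij
    have hit := i.isLt; have hjt := j.isLt
    rcases tri i with hi | hi | ⟨hi1, hi2⟩ <;> rcases tri j with hj | hj | ⟨hj1, hj2⟩
    · exact Fin.ext (hi.trans hj.symm)
    · exfalso; rw [hp0 i hi, hpl j hj] at hij; exact hyy' hij
    · exfalso; rw [hp0 i hi, hpm j hj1 hj2] at hij; exact hyf (j.1 - 1) (by omega) hij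
    · exfalso; rw [hpl i hi, hp0 j hj] at hij; exact hyy' hij.symm
    · exact Fin.ext (hi.trans hj.symm)
    · exfalso; rw [hpl i hi, hpm j hj1 hj2] at hij; exact hy'f (j.1 - 1) (by omega) hij
    · exfalso; rw [hpm i hi1 hi2, hp0 j hj] at hij; exact hyf (i.1 - 1) (by omega) hij.symm
    · exfalso; rw [hpm i hi1 hi2, hpl j hj] at hij; exact hy'f (i.1 - 1) (by omega) hij.symm
    · rw [hpm i hi1 hi2, hpm j hj1 hj2] at hij
      have := hinj (i.1 - 1) (by omega) (j.1 - 1) (by omega) hij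
      exact Fin.ext (by omega)
  · intro i j
    have hit := i.isLt; have hjt := j.isLt
    rcases tri i with hi | hi | ⟨hi1, hi2⟩ <;> rcases tri j with hj | hj | ⟨hj1, hj2⟩
    · rw [hp0 i hi, hp0 j hj]
      exact iff_of_false (G.irrefl) (by omega)
    · rw [hp0 i hi, hpl j hj]
      exact iff_of_false hyadj (by omega)
    · rw [hp0 i hi, hpm j hj1 hj2]
      by_cases hj3 : j.1 = 1
      · rw [hj3, show (1 : ℕ) - 1 = 0 from rfl, h0]
        exact iff_of_true hy.symm (by omega)
      · exact iff_of_false (hsub (j.1 - 1) (by omega) (by omega)).1 (by omega)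
    · rw [hpl i hi, hp0 j hj]
      exact iff_of_false (fun h => hyadj h.symm) (by omega)
    · rw [hpl i hi, hpl j hj]
      exact iff_of_false (G.irrefl) (by omega)
    · rw [hpl i hi, hpm j hj1 hj2]
      by_cases hj3 : j.1 = t - 2
      · have he : j.1 - 1 = n := by omega
        rw [he, hn]
        exact iff_of_true hy'.symm (by omega)
      · exact iff_of_false (hsub' (j.1 - 1) (by omega)).1 (by omega)
    · rw [hpm i hi1 hi2, hp0 j hj]
      by_cases hi3 : i.1 = 1
      · rw [hi3, show (1 : ℕ) - 1 = 0 from rfl, h0]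
        exact iff_of_true hy (by omega)
      · exact iff_of_false (fun h => (hsub (i.1 - 1) (by omega) (by omega)).1 h.symm) (by omega)
    · rw [hpm i hi1 hi2, hpl j hj]
      by_cases hi3 : i.1 = t - 2
      · have he : i.1 - 1 = n := by omega
        rw [he, hn]
        exact iff_of_true hy' (by omega)
      · exact iff_of_false (fun h => (hsub' (i.1 - 1) (by omega)).1 h.symm) (by omega)
    · rw [hpm i hi1 hi2, hpm j hj1 hj2]
      constructor
      · intro h
        have hab : i.1 - 1 ≠ j.1 - 1 := fun he => G.irrefl (he ▸ h)
        rcases Nat.lt_or_ge (i.1 - 1) (j.1 - 1) with hlt | hge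
        · by_cases hc : i.1 - 1 + 1 = j.1 - 1
          · omega
          · exact absurd h (hind (i.1 - 1) (j.1 - 1) (by omega) (by omega))
        · by_cases hc : j.1 - 1 + 1 = i.1 - 1
          · omega
          · exact absurd h.symm (hind (j.1 - 1) (i.1 - 1) (by omega) (by omega))
      · intro h
        rcases h with h | h
        · have he : j.1 - 1 = i.1 - 1 + 1 := by omega
          rw [he]
          exact hf.2 (i.1 - 1) (by omega)
        · have he : i.1 - 1 = j.1 - 1 + 1 := by omega
          rw [he]
          exact (hf.2 (j.1 - 1) (by omega)).symm

end CutLemmas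
section BCTree

variable {G : SimpleGraph V}

lemma edist_le_trans_nat {α : Type*} {G' : SimpleGraph α} {x z y : α} {a b c : ℕ}
    (h1 : G'.edist x z ≤ (a : ℕ∞)) (h2 : G'.edist z y ≤ (b : ℕ∞)) (hc : a + b ≤ c) :
    G'.edist x y ≤ (c : ℕ∞) := by
  calc G'.edist x y ≤ G'.edist x z + G'.edist z y := SimpleGraph.edist_triangle
    _ ≤ (a : ℕ∞) + (b : ℕ∞) := add_le_add h1 h2
    _ = ((a + b : ℕ) : ℕ∞) := by push_cast; rfl
    _ ≤ (c : ℕ∞) := Nat.cast_le.mpr hc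

lemma edist_adj {α : Type*} {G' : SimpleGraph α} {x y : α} (h : G'.Adj x y) :
    G'.edist x y ≤ (1 : ℕ∞) :=
  (SimpleGraph.edist_eq_one_iff_adj.mpr h).le

lemma bc_adj_lr [Fintype V] (B : {B : Finset V // IsBlock G Finset.univ B})
    (v : {v : V // IsCutVertex G v}) (h : v.1 ∈ B.1) :
    (bcTree G).Adj (Sum.inl B) (Sum.inr v) := h

lemma bc_adj_rl [Fintype V] (B : {B : Finset V // IsBlock G Finset.univ B})
    (v : {v : V // IsCutVertex G v}) (h : v.1 ∈ B.1) :
    (bcTree G).Adj (Sum.inr v) (Sum.inl B) := h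

lemma blocks_edist [Fintype V] {f : ℕ → V} {n : ℕ}
    (hf : WIn G Finset.univ f n) (hn : 1 ≤ n) :
    ∃ (B₀ B₁ : {B : Finset V // IsBlock G Finset.univ B}), f 0 ∈ B₀.1 ∧ f n ∈ B₁.1 ∧
      (bcTree G).edist (Sum.inl B₀) (Sum.inl B₁) ≤ ((2 * (n - 1) : ℕ) : ℕ∞) := by
  induction n, hn using Nat.le_induction with
  | base =>
    obtain ⟨B, hB, h0, h1⟩ := exists_block_of_adj (hf.2 0 one_pos)
    exact ⟨⟨B, hB⟩, ⟨B, hB⟩, h0, h1, by exact (le_of_eq SimpleGraph.edist_self).trans zero_le⟩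
  | succ m hm ih =>
    have hfm : WIn G Finset.univ f m :=
      ⟨fun i hi => hf.1 i (by omega), fun i hi => hf.2 i (by omega)⟩
    obtain ⟨B₀, B₁, h0, h1, hd⟩ := ih hfm
    obtain ⟨E, hE, hEm, hEm1⟩ := exists_block_of_adj (hf.2 m (by omega))
    by_cases heq : B₁ = (⟨E, hE⟩ : {B : Finset V // IsBlock G Finset.univ B})
    · refine ⟨B₀, ⟨E, hE⟩, h0, hEm1, le_trans (heq ▸ hd) (Nat.cast_le.mpr (show 2*(m-1) ≤ 2*(m+1-1) by omega))⟩
    · have hvne : B₁.1 ≠ E := fun h => heq (Subtype.ext h)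
      have hcut : IsCutVertex G (f m) := cut_of_mem_two_blocks B₁.2 hE hvne h1 hEm
      refine ⟨B₀, ⟨E, hE⟩, h0, hEm1, ?_⟩
      refine edist_le_trans_nat (z := Sum.inl B₁) (b := 2) hd ?_ (by omega)
      exact edist_le_trans_nat (z := Sum.inr ⟨f m, hcut⟩)
        (edist_adj (bc_adj_lr B₁ ⟨f m, hcut⟩ h1))
        (edist_adj (bc_adj_rl ⟨E, hE⟩ ⟨f m, hcut⟩ hEm)) le_rfl

variable [Fintype V] {t : ℕ}

lemma cutcut (ht : 3 ≤ t) (hfree : PtFree G t) (hconn : G.Connected)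
    (v w : {v : V // IsCutVertex G v}) :
    (bcTree G).edist (Sum.inr v) (Sum.inr w) ≤ ((2 * (t - 3) : ℕ) : ℕ∞) := by
  by_cases he : v = w
  · subst he; exact (le_of_eq SimpleGraph.edist_self).trans zero_le
  have hne : v.1 ≠ w.1 := fun h => he (Subtype.ext h)
  obtain ⟨n, f, hf, h0, hn, hmin⟩ :=
    exists_min_walk (Finset.mem_univ v.1) (reach_univ hconn v.1 w.1)
  have hn4 : n + 4 ≤ t := cut_dist2 ht hfree hconn v.2 w.2 hne hf h0 hn hmin
  have h1n : 1 ≤ n := by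
    rcases Nat.eq_zero_or_pos n with h | h
    · exact absurd (h0.symm.trans (h ▸ hn)) hne
    · exact h
  obtain ⟨B₀, B₁, hB0, hB1, hd⟩ := blocks_edist hf h1n
  refine edist_le_trans_nat (z := Sum.inl B₀) (a := 1) (b := 2 * (n - 1) + 1)
    (edist_adj (bc_adj_rl B₀ v (by rw [← h0]; exact hB0))) ?_ (by omega)
  exact edist_le_trans_nat (z := Sum.inl B₁) hd
    (edist_adj (bc_adj_lr B₁ w (by rw [← hn]; exact hB1))) le_rfl

lemma cutblock (ht : 3 ≤ t) (hfree : PtFree G t) (hconn : G.Connected)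
    (v : {v : V // IsCutVertex G v}) (B : {B : Finset V // IsBlock G Finset.univ B}) :
    (bcTree G).edist (Sum.inr v) (Sum.inl B) ≤ ((2 * (t - 3) : ℕ) : ℕ∞) := by
  have ht4 : 4 ≤ t := cut_t4 ht hfree hconn v.2
  by_cases hvB : v.1 ∈ B.1
  · refine le_trans (edist_adj (bc_adj_rl B v hvB)) ?_
    exact_mod_cast (by omega : (1 : ℕ) ≤ 2 * (t - 3))
  · obtain ⟨b, hb⟩ : B.1.Nonempty := B.2.2.1.1.1
    obtain ⟨n, f, hf, h0, hn⟩ :=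
      win_of_reachIn (reach_univ hconn v.1 b) (Finset.mem_univ v.1)
    have hex : ∃ k, f k ∈ B.1 := ⟨n, hn ▸ hb⟩
    set k := Nat.find hex with hk
    have hfk : f k ∈ B.1 := Nat.find_spec hex
    have hkn : k ≤ n := Nat.find_min' hex (hn ▸ hb)
    have h1k : 1 ≤ k := by
      rcases Nat.eq_zero_or_pos k with h | h
      · exact absurd (by rw [← h0, ← h]; exact hfk) hvB
      · exact h
    have hprev : f (k - 1) ∉ B.1 := Nat.find_min hex (by omega)
    have hedge : G.Adj (f (k - 1)) (f k) := by
      have := hf.2 (k - 1) (by omega)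
      rwa [show k - 1 + 1 = k by omega] at this
    obtain ⟨E, hE, hE1, hE2⟩ := exists_block_of_adj hedge
    have hEB : E ≠ B.1 := fun h => hprev (by rw [← h]; exact hE1)
    have hcutk : IsCutVertex G (f k) := cut_of_mem_two_blocks hE B.2 hEB hE2 hfk
    have hvk : v.1 ≠ f k := fun h => hvB (h ▸ hfk)
    obtain ⟨m, g, hg, hg0, hgm, hgmin⟩ :=
      exists_min_walk (Finset.mem_univ v.1) (reach_univ hconn v.1 (f k))
    have hm4 : m + 4 ≤ t := cut_dist2 ht hfree hconn v.2 hcutk hvk hg hg0 hgm hgmin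
    have h1m : 1 ≤ m := by
      rcases Nat.eq_zero_or_pos m with h | h
      · exact absurd (hg0.symm.trans (h ▸ hgm)) hvk
      · exact h
    obtain ⟨B₀, B₁, hB0, hB1, hd⟩ := blocks_edist hg h1m
    refine edist_le_trans_nat (z := Sum.inl B₀) (a := 1) (b := 2 * (m - 1) + 2)
      (edist_adj (bc_adj_rl B₀ v (by rw [← hg0]; exact hB0))) ?_ (by omega)
    refine edist_le_trans_nat (z := Sum.inl B₁) hd ?_ le_rfl
    exact edist_le_trans_nat (z := Sum.inr ⟨f k, hcutk⟩)
      (edist_adj (bc_adj_lr B₁ ⟨f k, hcutk⟩ (show f k ∈ B₁.1 by rw [← hgm]; exact hB1)))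
      (edist_adj (bc_adj_rl B ⟨f k, hcutk⟩ hfk)) le_rfl

lemma blockblock (ht : 3 ≤ t) (hfree : PtFree G t) (hconn : G.Connected)
    (B B' : {B : Finset V // IsBlock G Finset.univ B}) :
    (bcTree G).edist (Sum.inl B) (Sum.inl B') ≤ ((2 * (t - 3) : ℕ) : ℕ∞) := by
  by_cases he : B = B'
  · subst he; exact (le_of_eq SimpleGraph.edist_self).trans zero_le
  by_cases hshare : ∃ u, u ∈ B.1 ∧ u ∈ B'.1
  · obtain ⟨u, h1, h2⟩ := hshare
    have hne : B.1 ≠ B'.1 := fun h => he (Subtype.ext h)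
    have hcut : IsCutVertex G u := cut_of_mem_two_blocks B.2 B'.2 hne h1 h2
    have ht4 : 4 ≤ t := cut_t4 ht hfree hconn hcut
    exact edist_le_trans_nat (z := Sum.inr ⟨u, hcut⟩)
      (edist_adj (bc_adj_lr B ⟨u, hcut⟩ h1))
      (edist_adj (bc_adj_rl B' ⟨u, hcut⟩ h2)) (by omega)
  · push_neg at hshare
    obtain ⟨b, hb⟩ : B.1.Nonempty := B.2.2.1.1.1
    obtain ⟨b', hb'⟩ : B'.1.Nonempty := B'.2.2.1.1.1
    obtain ⟨n, f, hf, h0, hn⟩ :=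
      win_of_reachIn (reach_univ hconn b b') (Finset.mem_univ b)
    have hex : ∃ k, f k ∈ B'.1 := ⟨n, hn ▸ hb'⟩
    set k₁ := Nat.find hex with hk1
    have hfk1 : f k₁ ∈ B'.1 := Nat.find_spec hex
    have hk1n : k₁ ≤ n := Nat.find_min' hex (hn ▸ hb')
    have h1k1 : 1 ≤ k₁ := by
      rcases Nat.eq_zero_or_pos k₁ with h | h
      · have hfb : b ∈ B'.1 := by rw [← h0, ← h]; exact hfk1
        exact absurd hfb (hshare b hb)
      · exact h
    have hprev : f (k₁ - 1) ∉ B'.1 := Nat.find_min hex (by omega)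
    have hedge1 : G.Adj (f (k₁ - 1)) (f k₁) := by
      have := hf.2 (k₁ - 1) (by omega)
      rwa [show k₁ - 1 + 1 = k₁ by omega] at this
    obtain ⟨E₁, hE₁, hE₁a, hE₁b⟩ := exists_block_of_adj hedge1
    have hEB1 : E₁ ≠ B'.1 := fun h => hprev (by rw [← h]; exact hE₁a)
    have hcut1 : IsCutVertex G (f k₁) := cut_of_mem_two_blocks hE₁ B'.2 hEB1 hE₁b hfk1
    -- greatest index ≤ k₁ with value in B
    set k₀ := Nat.findGreatest (fun k => f k ∈ B.1) k₁ with hk0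
    have hfk0 : f k₀ ∈ B.1 := by
      have := Nat.findGreatest_spec (P := fun k => f k ∈ B.1) (Nat.zero_le k₁)
        (show (fun k => f k ∈ B.1) 0 by simp only []; rw [h0]; exact hb)
      simpa [hk0] using this
    have hk0le : k₀ ≤ k₁ := Nat.findGreatest_le k₁
    have hk0lt : k₀ < k₁ := by
      rcases Nat.lt_or_ge k₀ k₁ with h | h
      · exact h
      · exact absurd hfk1 (by
          have : k₀ = k₁ := by omega
          exact fun hmem => hshare (f k₁) (this ▸ hfk0) hmem)
    have hnext : f (k₀ + 1) ∉ B.1 := by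
      have := Nat.findGreatest_is_greatest (P := fun k => f k ∈ B.1) (n := k₁) (k := k₀ + 1)
        (by omega) (by omega)
      simpa using this
    have hedge0 : G.Adj (f k₀) (f (k₀ + 1)) := hf.2 k₀ (by omega)
    obtain ⟨E₀, hE₀, hE₀a, hE₀b⟩ := exists_block_of_adj hedge0
    have hEB0 : E₀ ≠ B.1 := fun h => hnext (by rw [← h]; exact hE₀b)
    have hcut0 : IsCutVertex G (f k₀) := cut_of_mem_two_blocks hE₀ B.2 hEB0 hE₀a hfk0
    have hne01 : f k₀ ≠ f k₁ := fun h => hshare (f k₀) hfk0 (h ▸ hfk1)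
    obtain ⟨m, g, hg, hg0, hgm, hgmin⟩ :=
      exists_min_walk (Finset.mem_univ (f k₀)) (reach_univ hconn (f k₀) (f k₁))
    have hm4 : m + 4 ≤ t := cut_dist2 ht hfree hconn hcut0 hcut1 hne01 hg hg0 hgm hgmin
    have h1m : 1 ≤ m := by
      rcases Nat.eq_zero_or_pos m with h | h
      · exact absurd (hg0.symm.trans (h ▸ hgm)) hne01
      · exact h
    obtain ⟨B₀, B₁, hB0, hB1, hd⟩ := blocks_edist hg h1m
    refine edist_le_trans_nat (z := Sum.inr ⟨f k₀, hcut0⟩) (a := 1) (b := 2 * (m - 1) + 3)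
      (edist_adj (bc_adj_lr B ⟨f k₀, hcut0⟩ hfk0)) ?_ (by omega)
    refine edist_le_trans_nat (z := Sum.inl B₀) (a := 1) (b := 2 * (m - 1) + 2)
      (edist_adj (bc_adj_rl B₀ ⟨f k₀, hcut0⟩ (show f k₀ ∈ B₀.1 by rw [← hg0]; exact hB0))) ?_ (by omega)
    refine edist_le_trans_nat (z := Sum.inl B₁) hd ?_ le_rfl
    exact edist_le_trans_nat (z := Sum.inr ⟨f k₁, hcut1⟩)
      (edist_adj (bc_adj_lr B₁ ⟨f k₁, hcut1⟩ (show f k₁ ∈ B₁.1 by rw [← hgm]; exact hB1)))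
      (edist_adj (bc_adj_rl B' ⟨f k₁, hcut1⟩ hfk1)) le_rfl

end BCTree

theorem bcTree_diam_le {V : Type} [Fintype V] (G : SimpleGraph V) (t : ℕ) (ht : 3 ≤ t)
    (hconn : G.Connected) (hfree : PtFree G t) :
    (bcTree G).diam ≤ 2 * (t - 3) := by
  have hediam : (bcTree G).ediam ≤ ((2 * (t - 3) : ℕ) : ℕ∞) := by
    apply SimpleGraph.ediam_le_of_edist_le
    intro x y
    cases x with
    | inl B =>
      cases y with
      | inl B' => exact blockblock ht hfree hconn B B'
      | inr w => exact SimpleGraph.edist_comm.trans_le (cutblock ht hfree hconn w B)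
    | inr v =>
      cases y with
      | inl B' => exact cutblock ht hfree hconn v B'
      | inr w => exact cutcut ht hfree hconn v w
  have := ENat.toNat_le_toNat hediam (ENat.coe_ne_top _)
  rw [ENat.toNat_coe] at this
  exact this
end
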